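/- Let G be a finite group with almost conjugate subgroups H and K, and let N be a normal subgroup of G contained in both H and K. Then the images H/N and K/N are almost conjugate subgroups of G/N. -/
import Mathlib


def AlmostConjugate {G : Type*} [Group G] (H K : Subgroup G) : Prop :=
  ∃ f : H ≃ K, ∀ h : H, IsConj (h : G) ((f h : K) : G)

private lemma card_fiber_aux {G : Type*} [Group G] (N H : Subgroup G) [N.Normal]
    (hNH : N ≤ H) (p : G ⧸ N → Prop) :
    Nat.card {h : H // p (QuotientGroup.mk' N (h : G))} =
      Nat.card N *
        Nat.card {x : H.map (QuotientGroup.mk' N) // p (x : G ⧸ N)} := by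
  classical
  set π := QuotientGroup.mk' N with hπ
  let A := {h : H // p (π (h : G))}
  let B := {x : H.map π // p (x : G ⧸ N)}
  let F : A → B := fun h => ⟨⟨π (h.1 : G), ⟨h.1, h.1.2, rfl⟩⟩, h.2⟩
  have key : ∀ x : B, Nonempty ({a : A // F a = x} ≃ N) := by
    intro x
    obtain ⟨g, hgH, hg⟩ := x.1.2
    have hmem : ∀ a : {a : A // F a = x}, g⁻¹ * (a.1.1 : G) ∈ N := by
      intro a
      have hx : π (a.1.1 : G) = π g := by
        have h1 : ((F a.1 : B) : G ⧸ N) = (x : G ⧸ N) := by rw [a.2]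
        have h2 : ((F a.1 : B) : G ⧸ N) = π (a.1.1 : G) := rfl
        rw [h2] at h1
        rw [h1, hg]
      rw [QuotientGroup.mk'_eq_mk'] at hx
      obtain ⟨z, hz, hz2⟩ := hx
      have : g⁻¹ * (a.1.1 : G) = z⁻¹ := by
        rw [← hz2]; group
      rw [this]
      exact N.inv_mem hz
    refine ⟨Equiv.ofBijective (fun a => ⟨g⁻¹ * (a.1.1 : G), hmem a⟩) ⟨?_, ?_⟩⟩
    · intro a b hab
      have h1 : g⁻¹ * (a.1.1 : G) = g⁻¹ * (b.1.1 : G) := congrArg Subtype.val hab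
      have h2 : (a.1.1 : G) = (b.1.1 : G) := mul_left_cancel h1
      ext1; ext1; ext1; exact h2
    · intro n
      have hgn : π (g * (n : G)) = (x : G ⧸ N) := by
        have h1 : π (n : G) = 1 := (QuotientGroup.eq_one_iff _).mpr n.2
        rw [map_mul, h1, mul_one, hg]
      have hgnH : g * (n : G) ∈ H := H.mul_mem hgH (hNH n.2)
      have hp : p (π (((⟨g * (n : G), hgnH⟩ : H) : G))) := by
        show p (π (g * (n : G)))
        rw [hgn]; exact x.2
      refine ⟨⟨⟨⟨g * (n : G), hgnH⟩, hp⟩, ?_⟩, ?_⟩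
      · ext1
        ext1
        exact hgn
      · ext1
        show g⁻¹ * (g * (n : G)) = (n : G)
        group
  have e1 : A ≃ Σ x : B, {a : A // F a = x} := (Equiv.sigmaFiberEquiv F).symm
  have e2 : (Σ x : B, {a : A // F a = x}) ≃ Σ _ : B, N :=
    Equiv.sigmaCongrRight fun x => (key x).some
  have e3 : (Σ _ : B, N) ≃ B × N := Equiv.sigmaEquivProd B N
  calc Nat.card A = Nat.card (B × N) := Nat.card_congr (e1.trans (e2.trans e3))
    _ = Nat.card N * Nat.card B := by rw [Nat.card_prod, mul_comm]

/-- Almost conjugacy descends to quotients: if N ⊴ G is contained in both of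
the almost conjugate subgroups H and K, then H/N and K/N are almost conjugate
in G/N. -/
theorem almostConjugate_quotient
    {G : Type*} [Group G] [Finite G] (H K N : Subgroup G) [N.Normal]
    (hNH : N ≤ H) (hNK : N ≤ K) (hHK : AlmostConjugate H K) :
    AlmostConjugate (H.map (QuotientGroup.mk' N)) (K.map (QuotientGroup.mk' N)) := by
  obtain ⟨f, hf⟩ := hHK
  set π := QuotientGroup.mk' N with hπ
  have key : ∀ q : ConjClasses (G ⧸ N),
      Nonempty ({x : H.map π // ConjClasses.mk (x : G ⧸ N) = q} ≃
        {y : K.map π // ConjClasses.mk (y : G ⧸ N) = q}) := by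
    intro q
    rw [← Finite.card_eq]
    have hH := card_fiber_aux N H hNH (fun y => ConjClasses.mk y = q)
    have hK := card_fiber_aux N K hNK (fun y => ConjClasses.mk y = q)
    have hHK' : Nat.card {h : H // ConjClasses.mk (π (h : G)) = q}
        = Nat.card {k : K // ConjClasses.mk (π (k : G)) = q} := by
      apply Nat.card_congr
      exact f.subtypeEquiv fun h => by
        rw [ConjClasses.mk_eq_mk_iff_isConj.mpr ((π : G →* G ⧸ N).map_isConj (hf h))]
    have hN : 0 < Nat.card N := Nat.card_pos
    have := hH.symm.trans (hHK'.trans hK)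
    exact Nat.eq_of_mul_eq_mul_left hN this
  refine ⟨Equiv.ofFiberEquiv (fun q => (key q).some), fun x => ?_⟩
  have := Equiv.ofFiberEquiv_map (fun q => (key q).some) x
  exact ConjClasses.mk_eq_mk_iff_isConj.mp this.symm
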